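/- Let d ≥ 2 be an integer, 1 < α < 2, 0 < γ ≤ 2, and let β ∈ (αγ/2, d+γ]. There exists a constant C > 0, depending only on d, α, γ, β, such that for every nonnegative f ∈ C_c(ℝ^{d+1}) and every (t,x) ∈ ℝ × ℝ^d, P_γ f(t,x) ≤ C (M_β f(t,x))^{(αγ/2)·(1/β)} (M f(t,x))^{1 − (αγ/2)·(1/β)}, where both sides are interpreted in [0,∞]. -/

import Mathlib

open MeasureTheory ENNReal Set Filter

noncomputable section

/-- The spatial space `ℝ^d`. -/
abbrev Spc (d : ℕ) := EuclideanSpace ℝ (Fin d)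

/-- Parabolic cylinder `C_ρ(t,x) = {(s,y) : t ≤ s ≤ t + ρ^α, |y - x| ≤ ρ}`. -/
def cylP (d : ℕ) (α ρ t : ℝ) (x : Spc d) : Set (ℝ × Spc d) :=
  {p | t ≤ p.1 ∧ p.1 ≤ t + ρ ^ α ∧ dist p.2 x ≤ ρ}

/-- Average of `f` over the parabolic cylinder `C_ρ(t,x)`. -/
def cylAvg (d : ℕ) (α ρ t : ℝ) (x : Spc d) (f : ℝ × Spc d → ℝ≥0∞) : ℝ≥0∞ :=
  (volume (cylP d α ρ t x))⁻¹ * ∫⁻ p in cylP d α ρ t x, f p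

/-- Parabolic Morrey norm `‖v‖_{E_q}`. -/
def morreyE (d : ℕ) (α q : ℝ) (v : ℝ × Spc d → ℝ≥0∞) : ℝ≥0∞ :=
  ⨆ (ρ : ℝ) (_ : 0 < ρ) (t : ℝ) (x : Spc d),
    ENNReal.ofReal ρ * (cylAvg d α ρ t x (fun p => v p ^ q)) ^ (1 / q)

/-- Elliptic Morrey norm `‖w‖_{M_q}` on `ℝ^d`. -/
def morreyM (d : ℕ) (q : ℝ) (w : Spc d → ℝ≥0∞) : ℝ≥0∞ :=
  ⨆ (ρ : ℝ) (_ : 0 < ρ) (x : Spc d),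
    ENNReal.ofReal ρ *
      ((volume (Metric.closedBall x ρ))⁻¹ *
        ∫⁻ y in Metric.closedBall x ρ, w y ^ q) ^ (1 / q)

/-- Fractional (parabolic) maximal function `M_β f(t,x)`. -/
def maxFun (d : ℕ) (α β : ℝ) (f : ℝ × Spc d → ℝ≥0∞) (t : ℝ) (x : Spc d) : ℝ≥0∞ :=
  ⨆ (ρ : ℝ) (_ : 0 < ρ), ENNReal.ofReal (ρ ^ β) * cylAvg d α ρ t x f

/-- Uncentered parabolic maximal function `M̂ f(z)`, sup over all parabolic
cylinders containing `z`. -/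
def hatM (d : ℕ) (α : ℝ) (f : ℝ × Spc d → ℝ≥0∞) (z : ℝ × Spc d) : ℝ≥0∞ :=
  ⨆ (ρ : ℝ) (_ : 0 < ρ) (t : ℝ) (x : Spc d) (_ : z ∈ cylP d α ρ t x),
    cylAvg d α ρ t x f

/-- The kernel `p_γ(s,y) = 1_{s>0} s^{γ/2} min(|y|^{-d-α}, s^{-(d+α)/α})`. -/
def pKer (d : ℕ) (α γ : ℝ) (s : ℝ) (y : Spc d) : ℝ≥0∞ :=
  if 0 < s then
    (if s ^ (1 / α) ≤ ‖y‖ then ENNReal.ofReal (s ^ (γ / 2) * ‖y‖ ^ (-(d : ℝ) - α))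
     else ENNReal.ofReal (s ^ (γ / 2 - ((d : ℝ) + α) / α)))
  else 0

/-- `P_γ f(t,x) = ∫ p_γ(s,y) f(t+s, x+y) dy ds`. -/
def Pop (d : ℕ) (α γ : ℝ) (f : ℝ × Spc d → ℝ≥0∞) (t : ℝ) (x : Spc d) : ℝ≥0∞ :=
  ∫⁻ p : ℝ × Spc d, pKer d α γ p.1 p.2 * f (t + p.1, x + p.2)

/-- `P*_γ f(t,x) = ∫ p_γ(s,y) f(t-s, x+y) dy ds`. -/
def PopStar (d : ℕ) (α γ : ℝ) (f : ℝ × Spc d → ℝ≥0∞) (t : ℝ) (x : Spc d) : ℝ≥0∞ :=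
  ∫⁻ p : ℝ × Spc d, pKer d α γ p.1 p.2 * f (t - p.1, x + p.2)


namespace Stmt3Aux

open Metric

variable {d : ℕ}

lemma cylP_eq (α ρ t : ℝ) (x : Spc d) :
    cylP d α ρ t x = Icc t (t + ρ ^ α) ×ˢ Metric.closedBall x ρ := by
  ext p
  simp only [cylP, mem_setOf_eq, mem_prod, mem_Icc, Metric.mem_closedBall]
  tauto

lemma volume_cylP (α ρ t : ℝ) (x : Spc d) (hρ : 0 ≤ ρ) :
    volume (cylP d α ρ t x)
      = ENNReal.ofReal (ρ ^ α) *
        (ENNReal.ofReal (ρ ^ (d : ℝ)) * volume (Metric.ball (0 : Spc d) 1)) := by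
  rw [cylP_eq, Measure.volume_eq_prod, Measure.prod_prod, Real.volume_Icc,
    add_sub_cancel_left, Measure.addHaar_closedBall _ x hρ, finrank_euclideanSpace_fin,
    ← Real.rpow_natCast ρ d]

lemma volume_cylP_ne_zero (α ρ t : ℝ) (x : Spc d) (hρ : 0 < ρ) :
    volume (cylP d α ρ t x) ≠ 0 := by
  rw [volume_cylP α ρ t x hρ.le]
  refine mul_ne_zero ?_ (mul_ne_zero ?_ (Metric.measure_ball_pos _ _ one_pos).ne')
  · simp only [ne_eq, ENNReal.ofReal_eq_zero, not_le]; positivity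
  · simp only [ne_eq, ENNReal.ofReal_eq_zero, not_le]; positivity

lemma volume_cylP_ne_top (α ρ t : ℝ) (x : Spc d) (hρ : 0 ≤ ρ) :
    volume (cylP d α ρ t x) ≠ ⊤ := by
  rw [volume_cylP α ρ t x hρ]
  exact ENNReal.mul_ne_top ofReal_ne_top
    (ENNReal.mul_ne_top ofReal_ne_top measure_ball_lt_top.ne)

lemma setLintegral_cylP (α ρ t : ℝ) (x : Spc d) (hρ : 0 < ρ) (F : ℝ × Spc d → ℝ≥0∞) :
    ∫⁻ q in cylP d α ρ t x, F q = volume (cylP d α ρ t x) * cylAvg d α ρ t x F := by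
  rw [cylAvg, ← mul_assoc,
    ENNReal.mul_inv_cancel (volume_cylP_ne_zero α ρ t x hρ) (volume_cylP_ne_top α ρ t x hρ.le),
    one_mul]

/-- Pointwise kernel bound: `p_γ(s,y) ≤ r^(αγ/2 - d - α)` with `r = max ‖y‖ s^(1/α)`. -/
lemma ker_le {α γ : ℝ} (hα : 1 < α) (hγ1 : 0 < γ) (hγ2 : γ ≤ 2) {s : ℝ} (hs : 0 < s)
    (y : Spc d) :
    pKer d α γ s y ≤
      ENNReal.ofReal ((max ‖y‖ (s ^ (1 / α))) ^ (α * γ / 2 - d - α)) := by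
  have hα0 : (0 : ℝ) < α := by linarith
  set r : ℝ := max ‖y‖ (s ^ (1 / α)) with hrdef
  have hsr : s ^ (1 / α) ≤ r := le_max_right _ _
  have hr : 0 < r := lt_of_lt_of_le (Real.rpow_pos_of_pos hs _) hsr
  have hps : (s ^ (1 / α)) ^ α = s := by
    rw [← Real.rpow_mul hs.le, one_div_mul_cancel hα0.ne', Real.rpow_one]
  have hs_le : s ≤ r ^ α := by
    calc s = (s ^ (1 / α)) ^ α := hps.symm
    _ ≤ r ^ α := Real.rpow_le_rpow (Real.rpow_nonneg hs.le _) hsr hα0.le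
  have hsg : s ^ (γ / 2) ≤ r ^ (α * γ / 2) := by
    calc s ^ (γ / 2) ≤ (r ^ α) ^ (γ / 2) :=
          Real.rpow_le_rpow hs.le hs_le (by linarith)
    _ = r ^ (α * γ / 2) := by rw [← Real.rpow_mul hr.le]; ring_nf
  have hmain : s ^ (γ / 2) * r ^ (-(d : ℝ) - α) ≤ r ^ (α * γ / 2 - d - α) := by
    calc s ^ (γ / 2) * r ^ (-(d : ℝ) - α)
        ≤ r ^ (α * γ / 2) * r ^ (-(d : ℝ) - α) :=
          mul_le_mul_of_nonneg_right hsg (Real.rpow_nonneg hr.le _)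
      _ = r ^ (α * γ / 2 - d - α) := by
          rw [← Real.rpow_add hr]; ring_nf
  rw [pKer, if_pos hs]
  split_ifs with h
  · have hre : r = ‖y‖ := max_eq_left h
    exact ENNReal.ofReal_le_ofReal (by rw [← hre] at *; exact hmain)
  · have hre : r = s ^ (1 / α) := max_eq_right (le_of_not_ge h)
    refine ENNReal.ofReal_le_ofReal ?_
    have : s ^ (γ / 2 - ((d : ℝ) + α) / α) = s ^ (γ / 2) * r ^ (-(d : ℝ) - α) := by
      rw [hre, ← Real.rpow_mul hs.le, ← Real.rpow_add hs]
      congr 1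
      field_simp
      ring
    rw [this]
    exact hmain

lemma lint_Ioi_rpow {r e : ℝ} (hr : 0 < r) (he : e < -1) :
    ∫⁻ ρ in Ioi r, ENNReal.ofReal (ρ ^ e) = ENNReal.ofReal (r ^ (e + 1) / (-(e + 1))) := by
  rw [← ofReal_integral_eq_lintegral_ofReal (integrableOn_Ioi_rpow_of_lt he hr)]
  · rw [integral_Ioi_rpow_of_lt he hr]
    congr 1; ring_nf; rw [show (-1 - e : ℝ) = -(1 + e) by ring, inv_neg, mul_neg]
  · filter_upwards [self_mem_ae_restrict measurableSet_Ioi] with ρ hρ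
    exact Real.rpow_nonneg (le_of_lt (lt_trans hr (mem_Ioi.mp hρ))) e

lemma lint_Ioc_rpow {R e : ℝ} (hR : 0 < R) (he : -1 < e) :
    ∫⁻ ρ in Ioc 0 R, ENNReal.ofReal (ρ ^ e) = ENNReal.ofReal (R ^ (e + 1) / (e + 1)) := by
  rw [← ofReal_integral_eq_lintegral_ofReal
    ((intervalIntegrable_iff_integrableOn_Ioc_of_le hR.le).mp
      (intervalIntegral.intervalIntegrable_rpow' he))]
  · rw [← intervalIntegral.integral_of_le hR.le, integral_rpow (Or.inl he),
      Real.zero_rpow (by linarith : e + 1 ≠ 0), sub_zero]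
  · filter_upwards [self_mem_ae_restrict measurableSet_Ioc] with ρ hρ
    exact Real.rpow_nonneg (le_of_lt hρ.1) e

/-- Layer-cake bound for the kernel. -/
lemma layer {α γ : ℝ} (hα : 1 < α) (hγ1 : 0 < γ) (hγ2 : γ ≤ 2)
    (had : α * γ / 2 < (d : ℝ) + α) (s : ℝ) (y : Spc d) :
    pKer d α γ s y ≤ ENNReal.ofReal ((d : ℝ) + α - α * γ / 2) *
      ∫⁻ ρ in Ioi (0 : ℝ),
        {ρ' : ℝ | 0 ≤ s ∧ s ≤ ρ' ^ α ∧ ‖y‖ ≤ ρ'}.indicator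
          (fun ρ' => ENNReal.ofReal (ρ' ^ (α * γ / 2 - d - α - 1))) ρ := by
  have hα0 : (0 : ℝ) < α := by linarith
  by_cases hs : 0 < s
  · set a := α * γ / 2 with ha
    set r : ℝ := max ‖y‖ (s ^ (1 / α)) with hrdef
    have hsr : s ^ (1 / α) ≤ r := le_max_right _ _
    have hr : 0 < r := lt_of_lt_of_le (Real.rpow_pos_of_pos hs _) hsr
    have hset : ∀ ρ ∈ Ioi (0 : ℝ),
        ({ρ' : ℝ | 0 ≤ s ∧ s ≤ ρ' ^ α ∧ ‖y‖ ≤ ρ'}).indicator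
          (fun ρ' => ENNReal.ofReal (ρ' ^ (a - d - α - 1))) ρ
        = (Ici r).indicator (fun ρ' => ENNReal.ofReal (ρ' ^ (a - d - α - 1))) ρ := by
      intro ρ hρ
      have hρ0 : (0 : ℝ) < ρ := hρ
      have hiff : ρ ∈ {ρ' : ℝ | 0 ≤ s ∧ s ≤ ρ' ^ α ∧ ‖y‖ ≤ ρ'} ↔ ρ ∈ Ici r := by
        simp only [mem_setOf_eq, mem_Ici, hrdef, max_le_iff]
        constructor
        · rintro ⟨-, h1, h2⟩
          refine ⟨h2, ?_⟩
          calc s ^ (1 / α) ≤ (ρ ^ α) ^ (1 / α) :=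
                Real.rpow_le_rpow hs.le h1 (by positivity)
          _ = ρ := by
                rw [← Real.rpow_mul hρ0.le, mul_one_div_cancel hα0.ne', Real.rpow_one]
        · rintro ⟨h2, h1⟩
          refine ⟨hs.le, ?_, h2⟩
          calc s = (s ^ (1 / α)) ^ α := by
                rw [← Real.rpow_mul hs.le, one_div_mul_cancel hα0.ne', Real.rpow_one]
          _ ≤ ρ ^ α := Real.rpow_le_rpow (Real.rpow_nonneg hs.le _) h1 hα0.le
      by_cases hmem : ρ ∈ Ici r
      · rw [indicator_of_mem (hiff.mpr hmem), indicator_of_mem hmem]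
      · rw [indicator_of_notMem (fun hc => hmem (hiff.mp hc)), indicator_of_notMem hmem]
    rw [setLIntegral_congr_fun measurableSet_Ioi hset]
    have hev : (∫⁻ ρ in Ioi (0 : ℝ),
          (Ici r).indicator (fun ρ' => ENNReal.ofReal (ρ' ^ (a - d - α - 1))) ρ)
        = ∫⁻ ρ in Ioi r, ENNReal.ofReal (ρ ^ (a - d - α - 1)) := by
      have hIci : Ici r ∩ Ioi (0 : ℝ) = Ici r :=
        inter_eq_left.mpr (fun z hz => lt_of_lt_of_le hr hz)
      rw [lintegral_indicator measurableSet_Ici, Measure.restrict_restrict measurableSet_Ici,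
        hIci, Measure.restrict_congr_set Ioi_ae_eq_Ici.symm]
    rw [hev, lint_Ioi_rpow hr (by linarith)]
    have h2 : (a - (d : ℝ) - α - 1 + 1) = a - d - α := by ring
    rw [h2, show -(a - (d : ℝ) - α) = (d : ℝ) + α - a from by ring,
      ← ENNReal.ofReal_mul (by linarith),
      show ((d : ℝ) + α - a) * (r ^ (a - (d : ℝ) - α) / ((d : ℝ) + α - a))
          = r ^ (a - (d : ℝ) - α) from by
            rw [mul_comm, div_mul_cancel₀ _ (by linarith : ((d : ℝ) + α - a) ≠ 0)]]
    exact ker_le hα hγ1 hγ2 hs y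
  · rw [pKer, if_neg hs]
    exact zero_le

/-- Main pointwise inequality: `P_γ f ≤ c₁ ω ∫_0^∞ ρ^(αγ/2-1) A(ρ) dρ`. -/
lemma key {α γ : ℝ} (hα : 1 < α) (hγ1 : 0 < γ) (hγ2 : γ ≤ 2)
    (had : α * γ / 2 < (d : ℝ) + α)
    (f : ℝ × Spc d → ℝ) (hf : Continuous f) (t : ℝ) (x : Spc d) :
    Pop d α γ (fun z => ENNReal.ofReal (f z)) t x ≤
      ENNReal.ofReal ((d : ℝ) + α - α * γ / 2) * volume (Metric.ball (0 : Spc d) 1) *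
        ∫⁻ ρ in Ioi (0 : ℝ), ENNReal.ofReal (ρ ^ (α * γ / 2 - 1)) *
          cylAvg d α ρ t x (fun z => ENNReal.ofReal (f z)) := by
  have hα0 : (0 : ℝ) < α := by linarith
  set ω := volume (Metric.ball (0 : Spc d) 1) with hω
  have hωtop : ω ≠ ⊤ := measure_ball_lt_top.ne
  set F : ℝ × Spc d → ℝ≥0∞ := fun z => ENNReal.ofReal (f z) with hFdef
  have hGm : Measurable fun p : ℝ × Spc d => F (t + p.1, x + p.2) := by
    apply ENNReal.measurable_ofReal.comp
    exact hf.measurable.comp (by fun_prop)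
  have hGtop : ∀ p : ℝ × Spc d, F (t + p.1, x + p.2) ≠ ⊤ := fun p => ENNReal.ofReal_ne_top
  have step1 : Pop d α γ F t x ≤
      ∫⁻ p : ℝ × Spc d,
        (ENNReal.ofReal ((d : ℝ) + α - α * γ / 2) *
          ∫⁻ ρ in Ioi (0 : ℝ),
            ({ρ' : ℝ | 0 ≤ p.1 ∧ p.1 ≤ ρ' ^ α ∧ ‖p.2‖ ≤ ρ'}).indicator
              (fun ρ' => ENNReal.ofReal (ρ' ^ (α * γ / 2 - d - α - 1))) ρ) *
          F (t + p.1, x + p.2) := by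
    rw [Pop]
    exact lintegral_mono fun p => mul_le_mul_left (layer hα hγ1 hγ2 had p.1 p.2) _
  refine le_trans step1 ?_
  have step2 : ∀ p : ℝ × Spc d,
      (ENNReal.ofReal ((d : ℝ) + α - α * γ / 2) *
        ∫⁻ ρ in Ioi (0 : ℝ),
          ({ρ' : ℝ | 0 ≤ p.1 ∧ p.1 ≤ ρ' ^ α ∧ ‖p.2‖ ≤ ρ'}).indicator
            (fun ρ' => ENNReal.ofReal (ρ' ^ (α * γ / 2 - d - α - 1))) ρ) *
        F (t + p.1, x + p.2)
      = ENNReal.ofReal ((d : ℝ) + α - α * γ / 2) *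
        ∫⁻ ρ in Ioi (0 : ℝ),
          ({ρ' : ℝ | 0 ≤ p.1 ∧ p.1 ≤ ρ' ^ α ∧ ‖p.2‖ ≤ ρ'}).indicator
            (fun ρ' => ENNReal.ofReal (ρ' ^ (α * γ / 2 - d - α - 1))) ρ *
            F (t + p.1, x + p.2) := by
    intro p
    rw [mul_assoc, lintegral_mul_const' _ _ (hGtop p)]
  simp only [step2]
  rw [lintegral_const_mul' _ _ ofReal_ne_top, mul_assoc]
  refine mul_le_mul_right (le_of_eq ?_) _
  have hU : MeasurableSet {q : (ℝ × Spc d) × ℝ | 0 ≤ q.1.1 ∧ q.1.1 ≤ q.2 ^ α ∧ ‖q.1.2‖ ≤ q.2} := by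
    have h1 : MeasurableSet {q : (ℝ × Spc d) × ℝ | 0 ≤ q.1.1} := by
      apply measurableSet_le <;> fun_prop
    have h2 : MeasurableSet {q : (ℝ × Spc d) × ℝ | q.1.1 ≤ q.2 ^ α} := by
      apply measurableSet_le <;> fun_prop
    have h3 : MeasurableSet {q : (ℝ × Spc d) × ℝ | ‖q.1.2‖ ≤ q.2} := by
      apply measurableSet_le <;> fun_prop
    exact h1.inter (h2.inter h3)
  have hswapm : AEMeasurable
      (Function.uncurry fun (p : ℝ × Spc d) (ρ : ℝ) =>
        ({ρ' : ℝ | 0 ≤ p.1 ∧ p.1 ≤ ρ' ^ α ∧ ‖p.2‖ ≤ ρ'}).indicator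
          (fun ρ' => ENNReal.ofReal (ρ' ^ (α * γ / 2 - d - α - 1))) ρ *
          F (t + p.1, x + p.2))
      ((volume : Measure (ℝ × Spc d)).prod (volume.restrict (Ioi 0))) := by
    have heq : (Function.uncurry fun (p : ℝ × Spc d) (ρ : ℝ) =>
        ({ρ' : ℝ | 0 ≤ p.1 ∧ p.1 ≤ ρ' ^ α ∧ ‖p.2‖ ≤ ρ'}).indicator
          (fun ρ' => ENNReal.ofReal (ρ' ^ (α * γ / 2 - d - α - 1))) ρ *
          F (t + p.1, x + p.2))
        = fun q : (ℝ × Spc d) × ℝ =>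
          ({q' : (ℝ × Spc d) × ℝ | 0 ≤ q'.1.1 ∧ q'.1.1 ≤ q'.2 ^ α ∧ ‖q'.1.2‖ ≤ q'.2}).indicator
            (fun q' => ENNReal.ofReal (q'.2 ^ (α * γ / 2 - d - α - 1))) q *
            F (t + q.1.1, x + q.1.2) := by
      funext q
      simp only [Function.uncurry, indicator_apply, mem_setOf_eq]
    rw [heq]
    exact ((Measurable.indicator (by fun_prop) hU).mul (hGm.comp measurable_fst)).aemeasurable
  rw [lintegral_lintegral_swap hswapm]
  have hinner : ∀ ρ ∈ Ioi (0 : ℝ),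
      (∫⁻ p : ℝ × Spc d,
        ({ρ' : ℝ | 0 ≤ p.1 ∧ p.1 ≤ ρ' ^ α ∧ ‖p.2‖ ≤ ρ'}).indicator
          (fun ρ' => ENNReal.ofReal (ρ' ^ (α * γ / 2 - d - α - 1))) ρ *
          F (t + p.1, x + p.2))
      = ω * (ENNReal.ofReal (ρ ^ (α * γ / 2 - 1)) * cylAvg d α ρ t x F) := by
    intro ρ hρ
    have hρ0 : (0 : ℝ) < ρ := hρ
    have hind : ∀ p : ℝ × Spc d,
        ({ρ' : ℝ | 0 ≤ p.1 ∧ p.1 ≤ ρ' ^ α ∧ ‖p.2‖ ≤ ρ'}).indicator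
          (fun ρ' => ENNReal.ofReal (ρ' ^ (α * γ / 2 - d - α - 1))) ρ *
          F (t + p.1, x + p.2)
        = (Icc (0:ℝ) (ρ ^ α) ×ˢ Metric.closedBall (0 : Spc d) ρ).indicator
            (fun p : ℝ × Spc d =>
              ENNReal.ofReal (ρ ^ (α * γ / 2 - d - α - 1)) * F (t + p.1, x + p.2)) p := by
      intro p
      have hmemiff : p ∈ Icc (0:ℝ) (ρ ^ α) ×ˢ Metric.closedBall (0 : Spc d) ρ ↔
          (0 ≤ p.1 ∧ p.1 ≤ ρ ^ α ∧ ‖p.2‖ ≤ ρ) := by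
        simp only [mem_prod, mem_Icc, Metric.mem_closedBall, dist_zero_right]
        tauto
      by_cases hp : 0 ≤ p.1 ∧ p.1 ≤ ρ ^ α ∧ ‖p.2‖ ≤ ρ
      · rw [indicator_of_mem (show ρ ∈ {ρ' : ℝ | 0 ≤ p.1 ∧ p.1 ≤ ρ' ^ α ∧ ‖p.2‖ ≤ ρ'} from hp),
          indicator_of_mem (hmemiff.mpr hp)]
      · rw [indicator_of_notMem
          (show ρ ∉ {ρ' : ℝ | 0 ≤ p.1 ∧ p.1 ≤ ρ' ^ α ∧ ‖p.2‖ ≤ ρ'} from hp),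
          indicator_of_notMem (fun hc => hp (hmemiff.mp hc)), zero_mul]
    rw [lintegral_congr hind,
      lintegral_indicator (measurableSet_Icc.prod Metric.isClosed_closedBall.measurableSet),
      lintegral_const_mul' _ _ ofReal_ne_top]
    have hmp : MeasurePreserving (fun p : ℝ × Spc d => (t + p.1, x + p.2)) volume volume := by
      rw [Measure.volume_eq_prod]
      exact (measurePreserving_add_left volume t).prod (measurePreserving_add_left volume x)
    have hemb : MeasurableEmbedding (fun p : ℝ × Spc d => (t + p.1, x + p.2)) :=
      ((Homeomorph.addLeft t).prodCongr (Homeomorph.addLeft x)).measurableEmbedding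
    have hpre : (fun p : ℝ × Spc d => (t + p.1, x + p.2)) ⁻¹' cylP d α ρ t x
        = Icc (0:ℝ) (ρ ^ α) ×ˢ Metric.closedBall (0 : Spc d) ρ := by
      ext p
      simp only [mem_preimage, cylP, mem_setOf_eq, mem_prod, mem_Icc, Metric.mem_closedBall,
        dist_zero_right, dist_eq_norm, add_sub_cancel_left, sub_zero]
      constructor
      · rintro ⟨h1, h2, h3⟩
        exact ⟨⟨by linarith, by linarith⟩, h3⟩
      · rintro ⟨⟨h1, h2⟩, h3⟩
        exact ⟨by linarith, by linarith, h3⟩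
    have htrans : (∫⁻ p in Icc (0:ℝ) (ρ ^ α) ×ˢ Metric.closedBall (0 : Spc d) ρ,
          F (t + p.1, x + p.2)) = ∫⁻ q in cylP d α ρ t x, F q := by
      rw [← hpre]
      exact hmp.setLIntegral_comp_preimage_emb hemb F _
    rw [htrans, setLintegral_cylP α ρ t x hρ0 F, volume_cylP α ρ t x hρ0.le, hω]
    have hsc : ENNReal.ofReal (ρ ^ (α * γ / 2 - d - α - 1)) *
        (ENNReal.ofReal (ρ ^ α) *
          (ENNReal.ofReal (ρ ^ (d:ℝ)) * volume (Metric.ball (0 : Spc d) 1)))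
        = volume (Metric.ball (0 : Spc d) 1) * ENNReal.ofReal (ρ ^ (α * γ / 2 - 1)) := by
      calc ENNReal.ofReal (ρ ^ (α * γ / 2 - d - α - 1)) *
            (ENNReal.ofReal (ρ ^ α) *
              (ENNReal.ofReal (ρ ^ (d:ℝ)) * volume (Metric.ball (0 : Spc d) 1)))
          = ENNReal.ofReal (ρ ^ (α * γ / 2 - d - α - 1)) * ENNReal.ofReal (ρ ^ α) *
              ENNReal.ofReal (ρ ^ (d:ℝ)) * volume (Metric.ball (0 : Spc d) 1) := by ring
        _ = ENNReal.ofReal (ρ ^ (α * γ / 2 - d - α - 1) * ρ ^ α * ρ ^ (d:ℝ)) *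
              volume (Metric.ball (0 : Spc d) 1) := by
            rw [← ENNReal.ofReal_mul (by positivity), ← ENNReal.ofReal_mul (by positivity)]
        _ = ENNReal.ofReal (ρ ^ (α * γ / 2 - 1)) * volume (Metric.ball (0 : Spc d) 1) := by
            rw [← Real.rpow_add hρ0, ← Real.rpow_add hρ0,
              show α * γ / 2 - (d:ℝ) - α - 1 + α + d = α * γ / 2 - 1 from by ring]
        _ = volume (Metric.ball (0 : Spc d) 1) * ENNReal.ofReal (ρ ^ (α * γ / 2 - 1)) :=
            mul_comm _ _
    rw [show ENNReal.ofReal (ρ ^ (α * γ / 2 - d - α - 1)) *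
        (ENNReal.ofReal (ρ ^ α) *
          (ENNReal.ofReal (ρ ^ (d:ℝ)) * volume (Metric.ball (0 : Spc d) 1)) *
          cylAvg d α ρ t x F)
        = ENNReal.ofReal (ρ ^ (α * γ / 2 - d - α - 1)) *
          (ENNReal.ofReal (ρ ^ α) *
            (ENNReal.ofReal (ρ ^ (d:ℝ)) * volume (Metric.ball (0 : Spc d) 1))) *
          cylAvg d α ρ t x F from (mul_assoc _ _ _).symm, hsc, mul_assoc]
  rw [setLIntegral_congr_fun measurableSet_Ioi hinner,
    lintegral_const_mul' _ _ hωtop]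

end Stmt3Aux


/-- interpolation bound
`P_γ f ≤ C (M_β f)^{(αγ/2)/β} (M f)^{1 - (αγ/2)/β}`, in `[0,∞]`. -/
theorem stmt_3 (d : ℕ) (hd : 2 ≤ d) (α γ β : ℝ) (hα1 : 1 < α) (hα2 : α < 2)
    (hγ1 : 0 < γ) (hγ2 : γ ≤ 2) (hβ1 : α * γ / 2 < β) (hβ2 : β ≤ d + γ) :
    ∃ C : ℝ, 0 < C ∧
      ∀ (f : ℝ × Spc d → ℝ), Continuous f → HasCompactSupport f → (∀ z, 0 ≤ f z) →
      ∀ (t : ℝ) (x : Spc d),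
      Pop d α γ (fun z => ENNReal.ofReal (f z)) t x ≤
        ENNReal.ofReal C *
          (maxFun d α β (fun z => ENNReal.ofReal (f z)) t x) ^ (α * γ / 2 * (1 / β)) *
          (maxFun d α 0 (fun z => ENNReal.ofReal (f z)) t x) ^ (1 - α * γ / 2 * (1 / β)) := by
  have hα0 : (0 : ℝ) < α := by linarith
  have hd2 : (2 : ℝ) ≤ (d : ℝ) := by exact_mod_cast hd
  have ha : 0 < α * γ / 2 := div_pos (mul_pos hα0 hγ1) two_pos
  have haα : α * γ / 2 ≤ α := by nlinarith
  have had : α * γ / 2 < (d : ℝ) + α := by linarith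
  have hβ0 : (0 : ℝ) < β := lt_trans ha hβ1
  have hβa : 0 < β - α * γ / 2 := by linarith
  set ω := volume (Metric.ball (0 : Spc d) 1) with hω
  have hωtop : ω ≠ ⊤ := measure_ball_lt_top.ne
  have hω0 : ω ≠ 0 := (Metric.measure_ball_pos _ _ one_pos).ne'
  have hωR : 0 < ω.toReal := ENNReal.toReal_pos hω0 hωtop
  have hCpos : 0 < ((d : ℝ) + α - α * γ / 2) * ω.toReal *
      (1 / (α * γ / 2) + 1 / (β - α * γ / 2)) :=
    mul_pos (mul_pos (by linarith) hωR)
      (add_pos (one_div_pos.mpr ha) (one_div_pos.mpr hβa))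
  refine ⟨((d : ℝ) + α - α * γ / 2) * ω.toReal * (1 / (α * γ / 2) + 1 / (β - α * γ / 2)),
    hCpos, ?_⟩
  intro f hf hcs hnn t x
  set F : ℝ × Spc d → ℝ≥0∞ := fun z => ENNReal.ofReal (f z) with hFdef
  set Mf := maxFun d α 0 F t x with hMdef
  set Nf := maxFun d α β F t x with hNdef
  set θ := α * γ / 2 * (1 / β) with hθdef
  have hθ0 : 0 < θ := mul_pos ha (one_div_pos.mpr hβ0)
  have hθ1 : θ < 1 := by
    rw [hθdef, mul_one_div]
    exact (div_lt_one hβ0).mpr hβ1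
  have havg_le_M : ∀ ρ : ℝ, 0 < ρ → cylAvg d α ρ t x F ≤ Mf := by
    intro ρ hρ
    have h := le_iSup₂ (f := fun (ρ : ℝ) (_ : 0 < ρ) =>
      ENNReal.ofReal (ρ ^ (0 : ℝ)) * cylAvg d α ρ t x F) ρ hρ
    rwa [Real.rpow_zero, ENNReal.ofReal_one, one_mul] at h
  have havg_le_N : ∀ ρ : ℝ, 0 < ρ →
      ENNReal.ofReal (ρ ^ β) * cylAvg d α ρ t x F ≤ Nf := by
    intro ρ hρ
    exact le_iSup₂ (f := fun (ρ : ℝ) (_ : 0 < ρ) =>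
      ENNReal.ofReal (ρ ^ β) * cylAvg d α ρ t x F) ρ hρ
  have hdeg : (∀ ρ : ℝ, 0 < ρ → cylAvg d α ρ t x F = 0) →
      Pop d α γ F t x ≤ ENNReal.ofReal (((d : ℝ) + α - α * γ / 2) * ω.toReal *
          (1 / (α * γ / 2) + 1 / (β - α * γ / 2))) * Nf ^ θ * Mf ^ (1 - θ) := by
    intro hA
    refine le_trans (Stmt3Aux.key hα1 hγ1 hγ2 had f hf t x) ?_
    have hz : (∫⁻ ρ in Ioi (0 : ℝ), ENNReal.ofReal (ρ ^ (α * γ / 2 - 1)) *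
        cylAvg d α ρ t x F) = 0 := by
      rw [setLIntegral_congr_fun measurableSet_Ioi
        (fun ρ hρ => by rw [hA ρ hρ, mul_zero])]
      simp
    rw [hz, mul_zero]
    exact zero_le
  by_cases hM0 : Mf = 0
  · exact hdeg fun ρ hρ => le_antisymm (hM0 ▸ havg_le_M ρ hρ) zero_le
  by_cases hN0 : Nf = 0
  · refine hdeg fun ρ hρ => ?_
    have h := havg_le_N ρ hρ
    rw [hN0, le_zero_iff, mul_eq_zero] at h
    rcases h with h | h
    · refine absurd h ?_
      simp only [ne_eq, ENNReal.ofReal_eq_zero, not_le]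
      exact Real.rpow_pos_of_pos hρ β
    · exact h
  have hNθ0 : Nf ^ θ ≠ 0 := by
    simp only [ne_eq, ENNReal.rpow_eq_zero_iff, not_or]
    exact ⟨fun h => hN0 h.1, fun h => absurd h.2 (not_lt.mpr hθ0.le)⟩
  have hMθ0 : Mf ^ (1 - θ) ≠ 0 := by
    simp only [ne_eq, ENNReal.rpow_eq_zero_iff, not_or]
    exact ⟨fun h => hM0 h.1, fun h => absurd h.2 (not_lt.mpr (by linarith))⟩
  have hC0 : ENNReal.ofReal (((d : ℝ) + α - α * γ / 2) * ω.toReal *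
      (1 / (α * γ / 2) + 1 / (β - α * γ / 2))) ≠ 0 := by
    simp only [ne_eq, ENNReal.ofReal_eq_zero, not_le]
    exact hCpos
  by_cases hNt : Nf = ⊤
  · rw [hNt, ENNReal.top_rpow_of_pos hθ0, ENNReal.mul_top hC0, ENNReal.top_mul hMθ0]
    exact le_top
  by_cases hMt : Mf = ⊤
  · rw [hMt, ENNReal.top_rpow_of_pos (by linarith : (0:ℝ) < 1 - θ),
      ENNReal.mul_top (mul_ne_zero hC0 hNθ0)]
    exact le_top
  -- main case
  set m := Mf.toReal with hmdef
  set n := Nf.toReal with hndef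
  have hm : 0 < m := ENNReal.toReal_pos hM0 hMt
  have hn : 0 < n := ENNReal.toReal_pos hN0 hNt
  have hMfr : Mf = ENNReal.ofReal m := (ENNReal.ofReal_toReal hMt).symm
  have hNfr : Nf = ENNReal.ofReal n := (ENNReal.ofReal_toReal hNt).symm
  set R := (n / m) ^ (1 / β) with hRdef
  have hR : 0 < R := Real.rpow_pos_of_pos (div_pos hn hm) _
  have hprod1 : R ^ (α * γ / 2) * m = n ^ θ * m ^ (1 - θ) := by
    rw [hRdef, ← Real.rpow_mul (div_nonneg hn.le hm.le),
      show 1 / β * (α * γ / 2) = θ from by rw [hθdef]; ring,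
      Real.div_rpow hn.le hm.le, Real.rpow_sub hm, Real.rpow_one]
    ring
  have hprod2 : R ^ (α * γ / 2 - β) * n = n ^ θ * m ^ (1 - θ) := by
    have hRβ : R ^ (-β) = m / n := by
      rw [hRdef, ← Real.rpow_mul (div_nonneg hn.le hm.le),
        show 1 / β * (-β) = -1 from by field_simp,
        Real.rpow_neg_one, inv_div]
    have hsplit : R ^ (α * γ / 2 - β) = R ^ (α * γ / 2) * R ^ (-β) := by
      rw [← Real.rpow_add hR, show α * γ / 2 + -β = α * γ / 2 - β from by ring]
    rw [hsplit, hRβ, mul_assoc, div_mul_cancel₀ _ hn.ne']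
    exact hprod1
  have hpow : ENNReal.ofReal (n ^ θ * m ^ (1 - θ)) = Nf ^ θ * Mf ^ (1 - θ) := by
    rw [ENNReal.ofReal_mul (Real.rpow_nonneg hn.le _), hMfr, hNfr,
      ENNReal.ofReal_rpow_of_pos hn, ENNReal.ofReal_rpow_of_pos hm]
  refine le_trans (Stmt3Aux.key hα1 hγ1 hγ2 had f hf t x) ?_
  have hIoc : (∫⁻ ρ in Ioc (0:ℝ) R, ENNReal.ofReal (ρ ^ (α * γ / 2 - 1)) *
      cylAvg d α ρ t x F) ≤ ENNReal.ofReal (1 / (α * γ / 2)) * (Nf ^ θ * Mf ^ (1 - θ)) := by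
    calc (∫⁻ ρ in Ioc (0:ℝ) R, ENNReal.ofReal (ρ ^ (α * γ / 2 - 1)) * cylAvg d α ρ t x F)
        ≤ ∫⁻ ρ in Ioc (0:ℝ) R, ENNReal.ofReal (ρ ^ (α * γ / 2 - 1)) * Mf := by
          refine setLIntegral_mono (by fun_prop) fun ρ hρ => ?_
          exact mul_le_mul_right (havg_le_M ρ hρ.1) _
      _ = (∫⁻ ρ in Ioc (0:ℝ) R, ENNReal.ofReal (ρ ^ (α * γ / 2 - 1))) * Mf :=
          lintegral_mul_const' _ _ hMt
      _ = ENNReal.ofReal (R ^ (α * γ / 2 - 1 + 1) / (α * γ / 2 - 1 + 1)) *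
            ENNReal.ofReal m := by
          rw [Stmt3Aux.lint_Ioc_rpow hR (by linarith), hMfr]
      _ = ENNReal.ofReal (1 / (α * γ / 2) * (R ^ (α * γ / 2) * m)) := by
          rw [← ENNReal.ofReal_mul (div_nonneg (Real.rpow_nonneg hR.le _)
            (by linarith : (0:ℝ) ≤ α * γ / 2 - 1 + 1))]
          congr 1
          rw [show α * γ / 2 - 1 + 1 = α * γ / 2 from by ring]
          ring
      _ = ENNReal.ofReal (1 / (α * γ / 2)) * (Nf ^ θ * Mf ^ (1 - θ)) := by
          rw [hprod1, ENNReal.ofReal_mul (one_div_pos.mpr ha).le, hpow]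
  have hAN : ∀ ρ : ℝ, 0 < ρ → ENNReal.ofReal (ρ ^ (α * γ / 2 - 1)) * cylAvg d α ρ t x F
      ≤ ENNReal.ofReal (ρ ^ (α * γ / 2 - 1 - β)) * Nf := by
    intro ρ hρ
    have h1 := mul_le_mul_right (havg_le_N ρ hρ) (ENNReal.ofReal (ρ ^ (α * γ / 2 - 1 - β)))
    rw [← mul_assoc, ← ENNReal.ofReal_mul (Real.rpow_nonneg hρ.le _), ← Real.rpow_add hρ,
      show α * γ / 2 - 1 - β + β = α * γ / 2 - 1 from by ring] at h1
    exact h1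
  have hIoi : (∫⁻ ρ in Ioi R, ENNReal.ofReal (ρ ^ (α * γ / 2 - 1)) * cylAvg d α ρ t x F)
      ≤ ENNReal.ofReal (1 / (β - α * γ / 2)) * (Nf ^ θ * Mf ^ (1 - θ)) := by
    calc (∫⁻ ρ in Ioi R, ENNReal.ofReal (ρ ^ (α * γ / 2 - 1)) * cylAvg d α ρ t x F)
        ≤ ∫⁻ ρ in Ioi R, ENNReal.ofReal (ρ ^ (α * γ / 2 - 1 - β)) * Nf := by
          refine setLIntegral_mono (by fun_prop) fun ρ hρ => hAN ρ (lt_trans hR hρ)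
      _ = (∫⁻ ρ in Ioi R, ENNReal.ofReal (ρ ^ (α * γ / 2 - 1 - β))) * Nf :=
          lintegral_mul_const' _ _ hNt
      _ = ENNReal.ofReal (R ^ (α * γ / 2 - 1 - β + 1) / (-(α * γ / 2 - 1 - β + 1))) *
            ENNReal.ofReal n := by
          rw [Stmt3Aux.lint_Ioi_rpow hR (by linarith), hNfr]
      _ = ENNReal.ofReal (1 / (β - α * γ / 2) * (R ^ (α * γ / 2 - β) * n)) := by
          rw [← ENNReal.ofReal_mul (div_nonneg (Real.rpow_nonneg hR.le _)
            (by linarith : (0:ℝ) ≤ -(α * γ / 2 - 1 - β + 1)))]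
          congr 1
          rw [show α * γ / 2 - 1 - β + 1 = α * γ / 2 - β from by ring]
          rw [show -(α * γ / 2 - β) = β - α * γ / 2 from by ring]
          ring
      _ = ENNReal.ofReal (1 / (β - α * γ / 2)) * (Nf ^ θ * Mf ^ (1 - θ)) := by
          rw [hprod2, ENNReal.ofReal_mul (one_div_pos.mpr hβa).le, hpow]
  calc ENNReal.ofReal ((d:ℝ) + α - α * γ / 2) * ω *
        (∫⁻ ρ in Ioi (0:ℝ), ENNReal.ofReal (ρ ^ (α * γ / 2 - 1)) * cylAvg d α ρ t x F)
      ≤ ENNReal.ofReal ((d:ℝ) + α - α * γ / 2) * ω *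
        ((ENNReal.ofReal (1 / (α * γ / 2)) + ENNReal.ofReal (1 / (β - α * γ / 2))) *
          (Nf ^ θ * Mf ^ (1 - θ))) := by
        refine mul_le_mul_right ?_ _
        rw [show Ioi (0:ℝ) = Ioc 0 R ∪ Ioi R from (Ioc_union_Ioi_eq_Ioi hR.le).symm,
          lintegral_union measurableSet_Ioi (Ioc_disjoint_Ioi le_rfl), add_mul]
        exact add_le_add hIoc hIoi
    _ = ENNReal.ofReal (((d : ℝ) + α - α * γ / 2) * ω.toReal *
          (1 / (α * γ / 2) + 1 / (β - α * γ / 2))) * Nf ^ θ * Mf ^ (1 - θ) := by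
        rw [ENNReal.ofReal_mul (mul_pos (by linarith : (0:ℝ) < (d:ℝ) + α - α * γ / 2) hωR).le,
          ENNReal.ofReal_mul (by linarith : (0:ℝ) ≤ (d:ℝ) + α - α * γ / 2),
          ENNReal.ofReal_toReal hωtop,
          ENNReal.ofReal_add (one_div_pos.mpr ha).le (one_div_pos.mpr hβa).le]
        ring
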